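/- arXiv:2109.03949 — 3 statements merged into one kernel-verified Lean document; each statement's English description precedes it below -/
import Mathlib

section
/- Let b > p₀ + 3 and k ∈ (0,1). If R² has the Beta(1/2, (b−1−p₀)/2) distribution, then P(R² > k) ≤ (1/B(1/2,(b−1−p₀)/2)) · ((1−k)^{b−p₀−2} · log(1/k) / (b−p₀−2))^{1/2}. -/
open MeasureTheory Set

/-- The Beta function `B(x,y) = Γ(x)Γ(y)/Γ(x+y)`. -/
noncomputable def betaFun (x y : ℝ) : ℝ := Real.Gamma x * Real.Gamma y / Real.Gamma (x + y)

/-- The Beta(a,b) probability measure on ℝ, given by its density on (0,1). -/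
noncomputable def betaMeasure (a b : ℝ) : Measure ℝ :=
  volume.withDensity fun x =>
    ENNReal.ofReal (if 0 < x ∧ x < 1 then x ^ (a - 1) * (1 - x) ^ (b - 1) / betaFun a b else 0)

/-- If `R² ~ Beta(1/2, (b−1−p₀)/2)` with `b > p₀ + 3`, then for `k ∈ (0,1)`,
`P(R² > k) ≤ (1/B(1/2,(b−1−p₀)/2)) ((1−k)^{b−p₀−2} log(1/k)/(b−p₀−2))^{1/2}`. -/
theorem stmt_1 (p₀ : ℕ) (b : ℝ) (hb : (p₀ : ℝ) + 3 < b) (k : ℝ) (hk : k ∈ Set.Ioo (0 : ℝ) 1) :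
    (betaMeasure (1 / 2) ((b - 1 - p₀) / 2) (Set.Ioi k)).toReal ≤
      (1 / betaFun (1 / 2) ((b - 1 - (p₀ : ℝ)) / 2)) *
        ((1 - k) ^ (b - (p₀ : ℝ) - 2) * Real.log (1 / k) / (b - (p₀ : ℝ) - 2)) ^ ((1 : ℝ) / 2) := by
  obtain ⟨hk0, hk1⟩ := hk
  set β : ℝ := (b - 1 - (p₀ : ℝ)) / 2 with hβdef
  set c : ℝ := b - (p₀ : ℝ) - 2 with hcdef
  have hc1 : 1 < c := by rw [hcdef]; linarith
  have hc0 : 0 < c := by linarith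
  have h2β : 2 * (β - 1) = c - 1 := by rw [hβdef, hcdef]; ring
  have hBpos : 0 < betaFun (1 / 2) β := by
    have h1 : 0 < Real.Gamma (1 / 2) := Real.Gamma_pos_of_pos (by norm_num)
    have h2 : 0 < Real.Gamma β := Real.Gamma_pos_of_pos (by rw [hβdef]; linarith)
    have h3 : 0 < Real.Gamma (1 / 2 + β) := Real.Gamma_pos_of_pos (by rw [hβdef]; linarith)
    exact div_pos (mul_pos h1 h2) h3
  have hlog : 0 ≤ Real.log (1 / k) := Real.log_nonneg (by rw [le_div_iff₀ hk0]; linarith)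
  -- Step 1: the measure as a lintegral over Ioo k 1
  have step1 : betaMeasure (1 / 2) β (Set.Ioi k) =
      ∫⁻ x in Set.Ioo k 1,
        ENNReal.ofReal (x ^ ((1 : ℝ) / 2 - 1) * (1 - x) ^ (β - 1) / betaFun (1 / 2) β) := by
    rw [betaMeasure, withDensity_apply _ measurableSet_Ioi]
    rw [show Set.Ioo k 1 = Set.Ioo 0 1 ∩ Set.Ioi k by
      rw [Set.inter_comm, Set.Ioi_inter_Ioo]; simp [max_eq_left hk0.le]]
    rw [← setLIntegral_indicator measurableSet_Ioo]
    refine setLIntegral_congr_fun measurableSet_Ioi (fun x hx => ?_)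
    by_cases h : x ∈ Set.Ioo (0 : ℝ) 1
    · simp [Set.indicator_of_mem h, h.1, h.2]
    · have : ¬(0 < x ∧ x < 1) := by simpa [Set.mem_Ioo] using h
      simp [Set.indicator_of_notMem h, this]
  -- the two L² integrals
  have hint1 : IntegrableOn (fun x : ℝ => x⁻¹) (Set.Ioo k 1) := by
    have : ContinuousOn (fun x : ℝ => x⁻¹) (Set.Icc k 1) := by
      apply ContinuousOn.inv₀ continuousOn_id
      intro x hx; exact ne_of_gt (lt_of_lt_of_le hk0 hx.1)
    exact (this.integrableOn_Icc).mono_set Set.Ioo_subset_Icc_self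
  have hcont2 : Continuous (fun x : ℝ => (1 - x) ^ (c - 1)) := by
    apply Continuous.rpow_const (continuous_const.sub continuous_id)
    intro x; right; linarith
  have hint2 : IntegrableOn (fun x : ℝ => (1 - x) ^ (c - 1)) (Set.Ioo k 1) :=
    (hcont2.continuousOn.integrableOn_Icc).mono_set Set.Ioo_subset_Icc_self
  have L1 : ∫⁻ x in Set.Ioo k 1, ENNReal.ofReal x⁻¹ = ENNReal.ofReal (Real.log (1 / k)) := by
    rw [← ofReal_integral_eq_lintegral_ofReal hint1
      (Filter.eventually_of_mem (self_mem_ae_restrict measurableSet_Ioo)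
        (fun x hx => inv_nonneg.mpr (le_of_lt (lt_trans hk0 hx.1))))]
    rw [← integral_Ioc_eq_integral_Ioo, ← intervalIntegral.integral_of_le hk1.le,
      integral_inv_of_pos hk0 one_pos]
  have L2 : ∫⁻ x in Set.Ioo k 1, ENNReal.ofReal ((1 - x) ^ (c - 1)) =
      ENNReal.ofReal ((1 - k) ^ c / c) := by
    rw [← ofReal_integral_eq_lintegral_ofReal hint2
      (Filter.eventually_of_mem (self_mem_ae_restrict measurableSet_Ioo)
        (fun x hx => Real.rpow_nonneg (by linarith [hx.2]) _))]
    congr 1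
    rw [← integral_Ioc_eq_integral_Ioo, ← intervalIntegral.integral_of_le hk1.le]
    have := intervalIntegral.integral_comp_sub_left (a := k) (b := 1)
      (fun x : ℝ => x ^ (c - 1)) 1
    rw [this, sub_self]
    rw [integral_rpow (Or.inl (by linarith))]
    rw [sub_add_cancel, Real.zero_rpow (by linarith)]
    ring
  -- Hölder's inequality
  have conj : Real.HolderConjugate 2 2 := Real.HolderConjugate.two_two
  have hf : AEMeasurable (fun x : ℝ => ENNReal.ofReal (x ^ ((1 : ℝ) / 2 - 1)))
      (volume.restrict (Set.Ioo k 1)) := by fun_prop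
  have hg : AEMeasurable (fun x : ℝ => ENNReal.ofReal ((1 - x) ^ (β - 1)))
      (volume.restrict (Set.Ioo k 1)) := by fun_prop
  have holder := ENNReal.lintegral_mul_le_Lp_mul_Lq (volume.restrict (Set.Ioo k 1)) conj hf hg
  have hfsq : ∫⁻ x in Set.Ioo k 1, (ENNReal.ofReal (x ^ ((1 : ℝ) / 2 - 1))) ^ (2 : ℝ) =
      ∫⁻ x in Set.Ioo k 1, ENNReal.ofReal x⁻¹ := by
    refine setLIntegral_congr_fun measurableSet_Ioo
      (fun x hx => ?_)
    have hx0 : 0 < x := lt_trans hk0 hx.1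
    rw [ENNReal.ofReal_rpow_of_pos (Real.rpow_pos_of_pos hx0 _), ← Real.rpow_mul hx0.le,
      show ((1 : ℝ) / 2 - 1) * 2 = -1 by norm_num, Real.rpow_neg_one]
  have hgsq : ∫⁻ x in Set.Ioo k 1, (ENNReal.ofReal ((1 - x) ^ (β - 1))) ^ (2 : ℝ) =
      ∫⁻ x in Set.Ioo k 1, ENNReal.ofReal ((1 - x) ^ (c - 1)) := by
    refine setLIntegral_congr_fun measurableSet_Ioo
      (fun x hx => ?_)
    have hx1 : (0 : ℝ) < 1 - x := by linarith [hx.2]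
    rw [ENNReal.ofReal_rpow_of_pos (Real.rpow_pos_of_pos hx1 _), ← Real.rpow_mul hx1.le,
      mul_comm, h2β]
  have hprod : ∫⁻ x in Set.Ioo k 1,
      ((fun x : ℝ => ENNReal.ofReal (x ^ ((1 : ℝ) / 2 - 1))) *
        (fun x : ℝ => ENNReal.ofReal ((1 - x) ^ (β - 1)))) x =
      ∫⁻ x in Set.Ioo k 1, ENNReal.ofReal (x ^ ((1 : ℝ) / 2 - 1) * (1 - x) ^ (β - 1)) := by
    refine setLIntegral_congr_fun measurableSet_Ioo
      (fun x hx => ?_)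
    have hx0 : 0 < x := lt_trans hk0 hx.1
    simp [ENNReal.ofReal_mul (Real.rpow_nonneg hx0.le _)]
  rw [hfsq, hgsq, hprod, L1, L2] at holder
  -- pull out the constant 1/B
  have step2 : betaMeasure (1 / 2) β (Set.Ioi k) =
      (∫⁻ x in Set.Ioo k 1, ENNReal.ofReal (x ^ ((1 : ℝ) / 2 - 1) * (1 - x) ^ (β - 1))) *
        ENNReal.ofReal (betaFun (1 / 2) β)⁻¹ := by
    rw [step1, ← lintegral_mul_const' _ _ ENNReal.ofReal_ne_top]
    refine setLIntegral_congr_fun measurableSet_Ioo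
      (fun x hx => ?_)
    have hx0 : 0 < x := lt_trans hk0 hx.1
    have hnn : 0 ≤ x ^ ((1 : ℝ) / 2 - 1) * (1 - x) ^ (β - 1) :=
      mul_nonneg (Real.rpow_nonneg hx0.le _) (Real.rpow_nonneg (by linarith [hx.2]) _)
    rw [div_eq_mul_inv, ENNReal.ofReal_mul hnn]
  have hL2nn : (0 : ℝ) ≤ (1 - k) ^ c / c :=
    div_nonneg (Real.rpow_nonneg (by linarith) _) hc0.le
  -- assemble
  have hbound : betaMeasure (1 / 2) β (Set.Ioi k) ≤
      ENNReal.ofReal ((1 / betaFun (1 / 2) β) *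
        ((1 - k) ^ c * Real.log (1 / k) / c) ^ ((1 : ℝ) / 2)) := by
    rw [step2]
    calc (∫⁻ x in Set.Ioo k 1, ENNReal.ofReal (x ^ ((1 : ℝ) / 2 - 1) * (1 - x) ^ (β - 1))) *
          ENNReal.ofReal (betaFun (1 / 2) β)⁻¹
        ≤ (ENNReal.ofReal (Real.log (1 / k)) ^ ((1 : ℝ) / 2) *
            ENNReal.ofReal ((1 - k) ^ c / c) ^ ((1 : ℝ) / 2)) *
          ENNReal.ofReal (betaFun (1 / 2) β)⁻¹ :=
          mul_le_mul_left holder _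
      _ = ENNReal.ofReal ((1 / betaFun (1 / 2) β) *
            ((1 - k) ^ c * Real.log (1 / k) / c) ^ ((1 : ℝ) / 2)) := by
          rw [ENNReal.ofReal_rpow_of_nonneg hlog (by norm_num),
            ENNReal.ofReal_rpow_of_nonneg hL2nn (by norm_num),
            ← ENNReal.ofReal_mul (Real.rpow_nonneg hlog _),
            ← ENNReal.ofReal_mul (mul_nonneg (Real.rpow_nonneg hlog _) (Real.rpow_nonneg hL2nn _))]
          congr 1
          rw [← Real.mul_rpow hlog hL2nn,
            show Real.log (1 / k) * ((1 - k) ^ c / c) = (1 - k) ^ c * Real.log (1 / k) / c by ring,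
            one_div]
          ring
  refine ENNReal.toReal_le_of_le_ofReal ?_ hbound
  exact mul_nonneg (le_of_lt (by positivity)) (Real.rpow_nonneg
    (div_nonneg (mul_nonneg (Real.rpow_nonneg (by linarith) _) hlog) hc0.le) _)
end

section
/- For positive reals x, y, the reciprocal of the Beta function satisfies 1/B(x,y) ≤ (x+y)^{x+y−1} / (x^{x−1} · y^{y−1}). -/
open Real intervalIntegral

/-- Integrability of the Beta integrand on subintervals of `[0,1]`. -/
lemma betaInt_integrable {x y : ℝ} (hx : 0 < x) (hy : 0 < y) {a b : ℝ}
    (ha : 0 ≤ a) (hb : b ≤ 1) (hab : a ≤ b) :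
    IntervalIntegrable (fun t : ℝ => t ^ (x - 1) * (1 - t) ^ (y - 1)) MeasureTheory.volume a b := by
  -- prove integrability on [0,1] and restrict
  have h01 : IntervalIntegrable (fun t : ℝ => t ^ (x - 1) * (1 - t) ^ (y - 1))
      MeasureTheory.volume 0 1 := by
    have h1 : IntervalIntegrable (fun t : ℝ => t ^ (x - 1) * (1 - t) ^ (y - 1))
        MeasureTheory.volume 0 (1/2) := by
      apply (intervalIntegrable_rpow' (by linarith : (-1:ℝ) < x - 1)).mul_continuousOn
      apply ContinuousOn.rpow_const (by fun_prop)
      intro t ht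
      rw [Set.uIcc_of_le (by norm_num)] at ht
      left
      have := ht.2
      intro h; linarith [sub_eq_zero.mp h]
    have h2 : IntervalIntegrable (fun t : ℝ => t ^ (x - 1) * (1 - t) ^ (y - 1))
        MeasureTheory.volume (1/2) 1 := by
      have hbase : IntervalIntegrable (fun t : ℝ => (1 - t) ^ (y - 1))
          MeasureTheory.volume (1/2) 1 := by
        have := (intervalIntegrable_rpow' (a := 0) (b := 1/2)
          (by linarith : (-1:ℝ) < y - 1)).comp_sub_left 1
        norm_num at this
        exact this.symm
      apply hbase.continuousOn_mul
      apply ContinuousOn.rpow_const (by fun_prop)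
      intro t ht
      rw [Set.uIcc_of_le (by norm_num)] at ht
      left
      have := ht.1
      intro h; linarith [h]
    exact h1.trans h2
  apply h01.mono_set
  rw [Set.uIcc_of_le hab, Set.uIcc_of_le (by norm_num)]
  exact Set.Icc_subset_Icc ha hb

/-- The Beta function as a real integral. -/
lemma betaFun_eq_integral {x y : ℝ} (hx : 0 < x) (hy : 0 < y) :
    betaFun x y = ∫ t in (0:ℝ)..1, t ^ (x - 1) * (1 - t) ^ (y - 1) := by
  have hc := Complex.Gamma_mul_Gamma_eq_betaIntegral
    (s := (x:ℂ)) (t := (y:ℂ)) (by simpa using hx) (by simpa using hy)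
  have hbeta : Complex.betaIntegral (x:ℂ) (y:ℂ) =
      ((∫ t in (0:ℝ)..1, t ^ (x - 1) * (1 - t) ^ (y - 1) : ℝ) : ℂ) := by
    rw [Complex.betaIntegral, ← intervalIntegral.integral_ofReal]
    apply intervalIntegral.integral_congr
    intro t ht
    rw [Set.uIcc_of_le (by norm_num : (0:ℝ) ≤ 1)] at ht
    push_cast
    rw [Complex.ofReal_cpow ht.1, Complex.ofReal_cpow (by linarith [ht.2] : (0:ℝ) ≤ 1 - t)]
    push_cast
    ring
  rw [hbeta, ← Complex.ofReal_add x y, Complex.Gamma_ofReal, Complex.Gamma_ofReal,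
    Complex.Gamma_ofReal, ← Complex.ofReal_mul, ← Complex.ofReal_mul] at hc
  have hreal : Real.Gamma x * Real.Gamma y =
      Real.Gamma (x + y) * ∫ t in (0:ℝ)..1, t ^ (x - 1) * (1 - t) ^ (y - 1) := by
    exact_mod_cast hc
  have hG : Real.Gamma (x + y) ≠ 0 := (Real.Gamma_pos_of_pos (by linarith)).ne'
  rw [betaFun, hreal, mul_div_cancel_left₀ _ hG]

/-- Key lower bound in the case `1 ≤ y`. -/
lemma beta_lower_of_one_le {x y : ℝ} (hx : 0 < x) (hy : 0 < y) (hy1 : 1 ≤ y) :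
    x ^ (x - 1) * y ^ (y - 1) / (x + y) ^ (x + y - 1) ≤ betaFun x y := by
  set s := x + y with hs_def
  have hs : 0 < s := by positivity
  set l := x / s with hl_def
  have hl0 : 0 < l := by positivity
  have hl1 : l < 1 := by
    rw [hl_def, div_lt_one hs]; linarith
  rw [betaFun_eq_integral hx hy]
  have hint1 := betaInt_integrable hx hy (le_refl (0:ℝ)) hl1.le hl0.le
  have hint2 := betaInt_integrable hx hy hl0.le (le_refl (1:ℝ)) hl1.le
  have hsplit : (∫ t in (0:ℝ)..1, t ^ (x - 1) * (1 - t) ^ (y - 1)) =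
      (∫ t in (0:ℝ)..l, t ^ (x - 1) * (1 - t) ^ (y - 1)) +
      ∫ t in (l:ℝ)..1, t ^ (x - 1) * (1 - t) ^ (y - 1) :=
    (intervalIntegral.integral_add_adjacent_intervals hint1 hint2).symm
  have hnonneg : 0 ≤ ∫ t in (l:ℝ)..1, t ^ (x - 1) * (1 - t) ^ (y - 1) := by
    apply intervalIntegral.integral_nonneg hl1.le
    intro t ht
    have h1 : (0:ℝ) ≤ t := le_trans hl0.le ht.1
    have h2 : (0:ℝ) ≤ 1 - t := by linarith [ht.2]
    positivity
  -- lower bound the first piece pointwise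
  have hmono : (∫ t in (0:ℝ)..l, t ^ (x - 1) * ((y/s) ^ (y - 1))) ≤
      ∫ t in (0:ℝ)..l, t ^ (x - 1) * (1 - t) ^ (y - 1) := by
    apply intervalIntegral.integral_mono_on hl0.le
    · exact (intervalIntegrable_rpow' (by linarith : (-1:ℝ) < x - 1)).mul_const _
    · exact hint1
    · intro t ht
      apply mul_le_mul_of_nonneg_left _ (Real.rpow_nonneg ht.1 _)
      apply Real.rpow_le_rpow (by positivity) _ (by linarith)
      have h1l : 1 - l = y / s := by
        rw [hl_def]; field_simp; linarith
      rw [← h1l]; linarith [ht.2]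
  have hval : (∫ t in (0:ℝ)..l, t ^ (x - 1) * ((y/s) ^ (y - 1))) =
      l ^ x / x * (y/s) ^ (y - 1) := by
    rw [intervalIntegral.integral_mul_const, integral_rpow (Or.inl (by linarith))]
    rw [sub_add_cancel, Real.zero_rpow hx.ne']
    ring
  -- algebra: l^x/x * (y/s)^(y-1) = x^(x-1)*y^(y-1)/s^(s-1)
  have halg : l ^ x / x * (y/s) ^ (y - 1) = x ^ (x - 1) * y ^ (y - 1) / s ^ (s - 1) := by
    rw [hl_def, Real.div_rpow hx.le hs.le, Real.div_rpow hy.le hs.le]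
    have e1 : x ^ x = x ^ (x - 1) * x := by
      rw [← Real.rpow_add_one hx.ne' (x - 1), sub_add_cancel]
    have e2 : s ^ (s - 1) = s ^ x * s ^ (y - 1) := by
      rw [← Real.rpow_add hs]; congr 1; rw [hs_def]; ring
    rw [e1, e2]
    have h1 : (0:ℝ) < s ^ x := Real.rpow_pos_of_pos hs _
    have h2 : (0:ℝ) < s ^ (y - 1) := Real.rpow_pos_of_pos hs _
    field_simp
  calc x ^ (x - 1) * y ^ (y - 1) / s ^ (s - 1)
      = ∫ t in (0:ℝ)..l, t ^ (x - 1) * ((y/s) ^ (y - 1)) := by rw [hval, halg]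
    _ ≤ ∫ t in (0:ℝ)..l, t ^ (x - 1) * (1 - t) ^ (y - 1) := hmono
    _ ≤ (∫ t in (0:ℝ)..l, t ^ (x - 1) * (1 - t) ^ (y - 1)) +
        ∫ t in (l:ℝ)..1, t ^ (x - 1) * (1 - t) ^ (y - 1) := le_add_of_nonneg_right hnonneg
    _ = _ := hsplit.symm

/-- Key lower bound in the case `x ≤ 1`, `y ≤ 1`. -/
lemma beta_lower_of_le_one {x y : ℝ} (hx : 0 < x) (hy : 0 < y) (hx1 : x ≤ 1) (hy1 : y ≤ 1) :
    x ^ (x - 1) * y ^ (y - 1) / (x + y) ^ (x + y - 1) ≤ betaFun x y := by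
  set s := x + y with hs_def
  have hs : 0 < s := by positivity
  set l := x / s with hl_def
  have hl0 : 0 < l := by positivity
  have hl1 : l < 1 := by rw [hl_def, div_lt_one hs]; linarith
  rw [betaFun_eq_integral hx hy]
  have hint1 := betaInt_integrable hx hy (le_refl (0:ℝ)) hl1.le hl0.le
  have hint2 := betaInt_integrable hx hy hl0.le (le_refl (1:ℝ)) hl1.le
  have hsplit : (∫ t in (0:ℝ)..1, t ^ (x - 1) * (1 - t) ^ (y - 1)) =
      (∫ t in (0:ℝ)..l, t ^ (x - 1) * (1 - t) ^ (y - 1)) +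
      ∫ t in (l:ℝ)..1, t ^ (x - 1) * (1 - t) ^ (y - 1) :=
    (intervalIntegral.integral_add_adjacent_intervals hint1 hint2).symm
  -- first piece ≥ ∫ t^(x-1) = l^x/x
  have hA : l ^ x / x ≤ ∫ t in (0:ℝ)..l, t ^ (x - 1) * (1 - t) ^ (y - 1) := by
    have hmono : (∫ t in (0:ℝ)..l, t ^ (x - 1)) ≤
        ∫ t in (0:ℝ)..l, t ^ (x - 1) * (1 - t) ^ (y - 1) := by
      apply intervalIntegral.integral_mono_on hl0.le
      · exact intervalIntegrable_rpow' (by linarith)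
      · exact hint1
      · intro t ht
        rcases eq_or_lt_of_le ht.1 with h0 | h0
        · rcases eq_or_lt_of_le hx1 with hx1' | hx1'
          · simp [← h0, hx1']
          · rw [← h0, Real.zero_rpow (by intro h; apply hx1'.ne; linarith [sub_eq_zero.mp h])]
            simp
        · have h1t : 0 < 1 - t := by linarith [lt_of_le_of_lt ht.2 hl1]
          nth_rewrite 1 [← mul_one (t ^ (x - 1))]
          apply mul_le_mul_of_nonneg_left _ (Real.rpow_nonneg h0.le _)
          exact Real.one_le_rpow_of_pos_of_le_one_of_nonpos h1t (by linarith [ht.1]) (by linarith)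
    calc l ^ x / x = ∫ t in (0:ℝ)..l, t ^ (x - 1) := by
          rw [integral_rpow (Or.inl (by linarith))]
          rw [sub_add_cancel, Real.zero_rpow hx.ne']
          ring
      _ ≤ _ := hmono
  -- second piece ≥ ∫ (1-t)^(y-1) = (y/s)^y/y
  have hB : (y/s) ^ y / y ≤ ∫ t in (l:ℝ)..1, t ^ (x - 1) * (1 - t) ^ (y - 1) := by
    have hmono : (∫ t in (l:ℝ)..1, (1 - t) ^ (y - 1)) ≤
        ∫ t in (l:ℝ)..1, t ^ (x - 1) * (1 - t) ^ (y - 1) := by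
      apply intervalIntegral.integral_mono_on hl1.le
      · have := (intervalIntegrable_rpow' (a := 0) (b := 1 - l)
          (by linarith : (-1:ℝ) < y - 1)).comp_sub_left 1
        norm_num at this
        exact this.symm
      · exact hint2
      · intro t ht
        rcases eq_or_lt_of_le ht.2 with h0 | h0
        · rcases eq_or_lt_of_le hy1 with hy1' | hy1'
          · simp [h0, hy1']
          · rw [h0]
            rw [show (1:ℝ) - 1 = 0 by ring,
              Real.zero_rpow (by intro h; apply hy1'.ne; linarith [sub_eq_zero.mp h])]
            simp
        · have ht0 : 0 < t := lt_of_lt_of_le hl0 ht.1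
          nth_rewrite 1 [← one_mul ((1 - t) ^ (y - 1))]
          apply mul_le_mul_of_nonneg_right _ (Real.rpow_nonneg (by linarith [h0]) _)
          exact Real.one_le_rpow_of_pos_of_le_one_of_nonpos ht0 h0.le (by linarith)
    calc (y/s) ^ y / y = ∫ t in (l:ℝ)..1, (1 - t) ^ (y - 1) := by
          rw [show (∫ t in (l:ℝ)..1, (1 - t) ^ (y - 1)) =
              ∫ t in (1-(1:ℝ))..(1 - l), t ^ (y - 1) from
            intervalIntegral.integral_comp_sub_left (fun t => t ^ (y - 1)) 1]
          rw [show (1:ℝ) - 1 = 0 by ring, integral_rpow (Or.inl (by linarith))]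
          rw [sub_add_cancel, Real.zero_rpow hy.ne']
          have h1l : 1 - l = y / s := by
            rw [hl_def]; field_simp; linarith
          rw [h1l]; ring
      _ ≤ _ := hmono
  -- algebra: l^x/x = x^(x-1)/s^x  and (y/s)^y/y = y^(y-1)/s^y
  have eA : l ^ x / x = x ^ (x - 1) / s ^ x := by
    rw [hl_def, Real.div_rpow hx.le hs.le]
    have e1 : x ^ x = x ^ (x - 1) * x := by
      rw [← Real.rpow_add_one hx.ne' (x - 1), sub_add_cancel]
    rw [e1]
    have h1 : (0:ℝ) < s ^ x := Real.rpow_pos_of_pos hs _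
    field_simp
  have eB : (y/s) ^ y / y = y ^ (y - 1) / s ^ y := by
    rw [Real.div_rpow hy.le hs.le]
    have e1 : y ^ y = y ^ (y - 1) * y := by
      rw [← Real.rpow_add_one hy.ne' (y - 1), sub_add_cancel]
    rw [e1]
    have h1 : (0:ℝ) < s ^ y := Real.rpow_pos_of_pos hs _
    field_simp
  -- final: x^(x-1)*y^(y-1)/s^(s-1) ≤ x^(x-1)/s^x + y^(y-1)/s^y
  have hfinal : x ^ (x - 1) * y ^ (y - 1) / s ^ (s - 1) ≤
      x ^ (x - 1) / s ^ x + y ^ (y - 1) / s ^ y := by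
    have hpx : (0:ℝ) < x ^ (x - 1) := Real.rpow_pos_of_pos hx _
    have hpy : (0:ℝ) < y ^ (y - 1) := Real.rpow_pos_of_pos hy _
    have hps : (0:ℝ) < s ^ (s - 1) := Real.rpow_pos_of_pos hs _
    have hpsx : (0:ℝ) < s ^ x := Real.rpow_pos_of_pos hs _
    have hpsy : (0:ℝ) < s ^ y := Real.rpow_pos_of_pos hs _
    -- identities: x^(x-1)/s^x = C * (s/x)^... ; we show the normalized inequality
    have key : (x/s) ^ (1 - x) + (y/s) ^ (1 - y) ≥ 1 := by
      have k1 : x/s ≤ (x/s) ^ (1 - x) := by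
        nth_rewrite 1 [← Real.rpow_one (x/s)]
        apply Real.rpow_le_rpow_of_exponent_ge (by positivity)
          (by rw [div_le_one hs]; linarith) (by linarith)
      have k2 : y/s ≤ (y/s) ^ (1 - y) := by
        nth_rewrite 1 [← Real.rpow_one (y/s)]
        apply Real.rpow_le_rpow_of_exponent_ge (by positivity)
          (by rw [div_le_one hs]; linarith) (by linarith)
      have : x/s + y/s = 1 := by field_simp; linarith
      linarith
    have ex2 : x ^ (x - 1) / s ^ x =
        (x ^ (x - 1) * y ^ (y - 1) / s ^ (s - 1)) * (y/s) ^ (1 - y) := by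
      have f1 : y ^ (y - 1) * y ^ (1 - y) = 1 := by
        rw [← Real.rpow_add hy]; norm_num
      have g1 : s ^ (s - 1) * s ^ (1 - y) = s ^ x := by
        rw [← Real.rpow_add hs]; congr 1; rw [hs_def]; ring
      rw [Real.div_rpow hy.le hs.le]
      rw [show (x ^ (x - 1) * y ^ (y - 1) / s ^ (s - 1)) * (y ^ (1 - y) / s ^ (1 - y)) =
          x ^ (x - 1) * (y ^ (y - 1) * y ^ (1 - y)) / (s ^ (s - 1) * s ^ (1 - y)) by
        field_simp]
      rw [f1, g1, mul_one]
    have ey2 : y ^ (y - 1) / s ^ y =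
        (x ^ (x - 1) * y ^ (y - 1) / s ^ (s - 1)) * (x/s) ^ (1 - x) := by
      have f1 : x ^ (x - 1) * x ^ (1 - x) = 1 := by
        rw [← Real.rpow_add hx]; norm_num
      have g1 : s ^ (s - 1) * s ^ (1 - x) = s ^ y := by
        rw [← Real.rpow_add hs]; congr 1; rw [hs_def]; ring
      rw [Real.div_rpow hx.le hs.le]
      rw [show (x ^ (x - 1) * y ^ (y - 1) / s ^ (s - 1)) * (x ^ (1 - x) / s ^ (1 - x)) =
          y ^ (y - 1) * (x ^ (x - 1) * x ^ (1 - x)) / (s ^ (s - 1) * s ^ (1 - x)) by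
        field_simp]
      rw [f1, g1, mul_one]
    rw [ex2, ey2, ← mul_add]
    nth_rewrite 1 [← mul_one (x ^ (x - 1) * y ^ (y - 1) / s ^ (s - 1))]
    apply mul_le_mul_of_nonneg_left _ (by positivity)
    linarith [key]
  calc x ^ (x - 1) * y ^ (y - 1) / s ^ (s - 1)
      ≤ x ^ (x - 1) / s ^ x + y ^ (y - 1) / s ^ y := hfinal
    _ = l ^ x / x + (y/s) ^ y / y := by rw [eA, eB]
    _ ≤ (∫ t in (0:ℝ)..l, t ^ (x - 1) * (1 - t) ^ (y - 1)) +
        ∫ t in (l:ℝ)..1, t ^ (x - 1) * (1 - t) ^ (y - 1) := add_le_add hA hB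
    _ = _ := hsplit.symm

/-- Full lower bound. -/
lemma beta_lower {x y : ℝ} (hx : 0 < x) (hy : 0 < y) :
    x ^ (x - 1) * y ^ (y - 1) / (x + y) ^ (x + y - 1) ≤ betaFun x y := by
  rcases le_or_gt 1 y with hy1 | hy1
  · exact beta_lower_of_one_le hx hy hy1
  rcases le_or_gt 1 x with hx1 | hx1
  · have := beta_lower_of_one_le hy hx hx1
    have hsymm : betaFun y x = betaFun x y := by
      rw [betaFun, betaFun, mul_comm, add_comm]
    rw [hsymm] at this
    calc x ^ (x - 1) * y ^ (y - 1) / (x + y) ^ (x + y - 1)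
        = y ^ (y - 1) * x ^ (x - 1) / (y + x) ^ (y + x - 1) := by
          rw [mul_comm, add_comm x y]
      _ ≤ betaFun x y := this
  · exact beta_lower_of_le_one hx hy hx1.le hy1.le

/-- For `x, y > 0`, `1/B(x,y) ≤ (x+y)^{x+y−1}/(x^{x−1} y^{y−1})`. -/
theorem stmt_3 (x y : ℝ) (hx : 0 < x) (hy : 0 < y) :
    1 / betaFun x y ≤ (x + y) ^ (x + y - 1) / (x ^ (x - 1) * y ^ (y - 1)) := by
  have hlow : x ^ (x - 1) * y ^ (y - 1) / (x + y) ^ (x + y - 1) ≤ betaFun x y :=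
    beta_lower hx hy
  have hpos : 0 < x ^ (x - 1) * y ^ (y - 1) / (x + y) ^ (x + y - 1) := by positivity
  calc 1 / betaFun x y ≤ 1 / (x ^ (x - 1) * y ^ (y - 1) / (x + y) ^ (x + y - 1)) :=
        one_div_le_one_div_of_le hpos hlow
    _ = (x + y) ^ (x + y - 1) / (x ^ (x - 1) * y ^ (y - 1)) := one_div_div _ _
end

section
/- Let Y ~ χ²_n be a (central) chi-square random variable with n degrees of freedom. Then for any x ≥ 0, P(Y ≥ n + 2√(nx) + 2x) ≤ exp(−x). -/
open MeasureTheory ProbabilityTheory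
open scoped NNReal ENNReal

lemma aux_core_ineq {u : ℝ} (h0 : 0 ≤ u) (h1 : u < 1) :
    (1 - u)⁻¹ ≤ Real.exp (u + u ^ 2 / (2 * (1 - u))) := by
  have hd : 0 < 1 - u := by linarith
  set w : ℝ := u + u ^ 2 / (2 * (1 - u)) with hw_def
  have hw : 0 ≤ w := by positivity
  have h2 : 1 + w + w ^ 2 / 2 ≤ Real.exp w := Real.quadratic_le_exp_of_nonneg hw
  have h_eq : 2*(1-u)*w = u*(2-u) := by rw [hw_def]; field_simp; ring
  have h_sq : (2*(1-u)*w)^2 = (u*(2-u))^2 := by rw [h_eq]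
  have hA : (1-u)*w = u - u^2/2 := by linear_combination h_eq / 2
  have hB : u^2 ≤ (1-u)*w^2 := by
    nlinarith [h_sq, hd, sq_nonneg (u^2)]
  have key : 1 ≤ (1 - u) * (1 + w + w ^ 2 / 2) := by
    have hexp : (1-u)*(1+w+w^2/2) = (1-u) + (1-u)*w + ((1-u)*w^2)/2 := by ring
    rw [hexp]
    nlinarith [hA, hB]
  have h3 : (1 - u)⁻¹ ≤ 1 + w + w ^ 2 / 2 := by
    rw [inv_eq_one_div, div_le_iff₀ hd]
    linarith [key]
  linarith [h2]

lemma aux_sqrt_inv_le {t : ℝ} (h0 : 0 ≤ t) (h1 : t < 1/2) :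
    (Real.sqrt (1 - 2*t))⁻¹ ≤ Real.exp (t + t^2/(1-2*t)) := by
  have hd : 0 < 1 - 2*t := by linarith
  have core := aux_core_ineq (u := 2*t) (by linarith) (by linarith)
  have harg : 2*t + (2*t)^2/(2*(1-2*t)) = 2 * (t + t^2/(1-2*t)) := by
    field_simp
  rw [harg] at core
  set c : ℝ := t + t^2/(1-2*t)
  calc (Real.sqrt (1-2*t))⁻¹ = Real.sqrt ((1-2*t)⁻¹) := (Real.sqrt_inv _).symm
    _ ≤ Real.sqrt (Real.exp (2*c)) := Real.sqrt_le_sqrt core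
    _ = Real.exp c := by
        rw [show (2:ℝ)*c = c + c by ring, Real.exp_add, ← sq, Real.sqrt_sq (Real.exp_pos c).le]

lemma aux_pt {t : ℝ} (y : ℝ) :
    gaussianPDFReal 0 1 y * Real.exp (t * y^2)
      = (Real.sqrt (2*Real.pi))⁻¹ * Real.exp (-(1/2 - t) * y^2) := by
  rw [gaussianPDFReal]
  simp only [NNReal.coe_one, mul_one, sub_zero]
  rw [mul_assoc, ← Real.exp_add]
  congr 1
  ring

lemma aux_vol_integrable {t : ℝ} (ht : t < 1/2) :
    Integrable (fun y : ℝ => gaussianPDFReal 0 1 y * Real.exp (t * y^2)) := by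
  have hb : (0:ℝ) < 1/2 - t := by linarith
  simp only [aux_pt]
  exact (integrable_exp_neg_mul_sq hb).const_mul _

lemma aux_integrable_exp_sq {t : ℝ} (ht : t < 1/2) :
    Integrable (fun y : ℝ => Real.exp (t * y ^ 2)) (gaussianReal 0 1) := by
  rw [gaussianReal_of_var_ne_zero 0 one_ne_zero,
    integrable_withDensity_iff (measurable_gaussianPDF 0 1)
      (Filter.Eventually.of_forall fun y => ENNReal.ofReal_lt_top)]
  have h : (fun y : ℝ => Real.exp (t * y ^ 2) * (gaussianPDF 0 1 y).toReal)
      = fun y => gaussianPDFReal 0 1 y * Real.exp (t * y^2) := by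
    funext y
    rw [gaussianPDF, ENNReal.toReal_ofReal (gaussianPDFReal_nonneg 0 1 y), mul_comm]
  rw [h]
  exact aux_vol_integrable ht

lemma aux_integral_exp_sq {t : ℝ} (ht : t < 1/2) :
    ∫ y, Real.exp (t * y ^ 2) ∂(gaussianReal 0 1) = (Real.sqrt (1 - 2*t))⁻¹ := by
  have hb : (0:ℝ) < 1/2 - t := by linarith
  rw [gaussianReal_of_var_ne_zero 0 one_ne_zero]
  have hpdf : gaussianPDF 0 1 = fun y => ((Real.toNNReal (gaussianPDFReal 0 1 y) : ℝ≥0) : ℝ≥0∞) := rfl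
  rw [hpdf, integral_withDensity_eq_integral_smul
      ((measurable_gaussianPDFReal 0 1).real_toNNReal) _]
  have h : (fun y : ℝ => Real.toNNReal (gaussianPDFReal 0 1 y) • Real.exp (t * y ^ 2))
      = fun y => (Real.sqrt (2*Real.pi))⁻¹ * Real.exp (-(1/2 - t) * y^2) := by
    funext y
    rw [NNReal.smul_def, smul_eq_mul, Real.coe_toNNReal _ (gaussianPDFReal_nonneg 0 1 y), aux_pt]
  rw [h, integral_const_mul, integral_gaussian]
  have h2 : Real.sqrt (2*Real.pi) = Real.sqrt 2 * Real.sqrt Real.pi :=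
    Real.sqrt_mul (by norm_num) _
  have h3 : Real.sqrt (Real.pi / (1/2 - t)) = Real.sqrt Real.pi / Real.sqrt (1/2 - t) :=
    Real.sqrt_div Real.pi_pos.le _
  have h4 : Real.sqrt (1 - 2*t) = Real.sqrt 2 * Real.sqrt (1/2 - t) := by
    rw [← Real.sqrt_mul (by norm_num)]
    congr 1; ring
  rw [h2, h3, h4]
  have hπ : Real.sqrt Real.pi ≠ 0 := ne_of_gt (Real.sqrt_pos.2 Real.pi_pos)
  have h2' : Real.sqrt 2 ≠ 0 := by positivity
  have hb' : Real.sqrt (1/2 - t) ≠ 0 := ne_of_gt (Real.sqrt_pos.2 hb)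
  rw [mul_inv]
  field_simp

lemma aux_expo {n : ℕ} (hn : 1 ≤ n) {x : ℝ} (hx : 0 < x) :
    -(Real.sqrt x / (Real.sqrt n + 2*Real.sqrt x)) * ((n:ℝ) + 2*Real.sqrt ((n:ℝ)*x) + 2*x)
      + (n:ℝ) * ((Real.sqrt x / (Real.sqrt n + 2*Real.sqrt x))
        + (Real.sqrt x / (Real.sqrt n + 2*Real.sqrt x))^2
          / (1 - 2*(Real.sqrt x / (Real.sqrt n + 2*Real.sqrt x)))) = -x := by
  have hn0 : (0:ℝ) < (n:ℝ) := by exact_mod_cast hn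
  set s : ℝ := Real.sqrt n with hs_def
  set r : ℝ := Real.sqrt x with hr_def
  have hs : 0 < s := Real.sqrt_pos.2 hn0
  have hr : 0 < r := Real.sqrt_pos.2 hx
  have hden : 0 < s + 2*r := by linarith
  have hn' : (n:ℝ) = s^2 := (Real.sq_sqrt hn0.le).symm
  have hx' : x = r^2 := (Real.sq_sqrt hx.le).symm
  have hnx : Real.sqrt ((n:ℝ)*x) = s*r := by
    rw [Real.sqrt_mul (Nat.cast_nonneg n)]
  have h12 : 1 - 2*(r/(s+2*r)) = s/(s+2*r) := by
    field_simp
    ring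
  rw [h12, hnx, hn']
  rw [hx']
  field_simp
  ring

lemma aux_iIndepFun_ae_eq {Ω ι : Type*} [MeasurableSpace Ω] {μ : Measure Ω}
    {β : ι → Type*} {m : ∀ i, MeasurableSpace (β i)} {f g : ∀ i, Ω → β i}
    (hf : iIndepFun (m := m) f μ) (h : ∀ i, f i =ᵐ[μ] g i) : iIndepFun (m := m) g μ := by
  rw [iIndepFun_iff_measure_inter_preimage_eq_mul] at hf ⊢
  intro S sets hsets
  have hSae : ∀ᵐ ω ∂μ, ∀ i ∈ S, f i ω = g i ω :=
    (MeasureTheory.ae_ball_iff S.countable_toSet).2 fun i _ => h i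
  have h1 : μ (⋂ i ∈ S, g i ⁻¹' sets i) = μ (⋂ i ∈ S, f i ⁻¹' sets i) := by
    apply measure_congr
    filter_upwards [hSae] with ω hω
    show (ω ∈ ⋂ i ∈ S, g i ⁻¹' sets i) = (ω ∈ ⋂ i ∈ S, f i ⁻¹' sets i)
    simp only [Set.mem_iInter, Set.mem_preimage, eq_iff_iff]
    constructor <;> intro hmem i hi
    · rw [hω i hi]; exact hmem i hi
    · rw [← hω i hi]; exact hmem i hi
  have h2 : ∀ i, μ (g i ⁻¹' sets i) = μ (f i ⁻¹' sets i) := fun i => by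
    apply measure_congr
    filter_upwards [h i] with ω hω
    show (ω ∈ g i ⁻¹' sets i) = (ω ∈ f i ⁻¹' sets i)
    simp only [Set.mem_preimage, eq_iff_iff, hω]
  rw [h1, hf S hsets]
  exact Finset.prod_congr rfl fun i _ => (h2 i).symm

/-- Upper tail bound for a central chi-square variable `Y = ∑ Zᵢ²` with `Zᵢ` i.i.d. standard
normals: `P(Y ≥ n + 2√(nx) + 2x) ≤ exp(−x)` for `x ≥ 0`. -/
theorem stmt_11 {Ω : Type*} [MeasurableSpace Ω] (μ : Measure Ω) [IsProbabilityMeasure μ]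
    (n : ℕ) (Z : Fin n → Ω → ℝ)
    (hInd : iIndepFun Z μ)
    (hZ : ∀ i, Measure.map (Z i) μ = gaussianReal 0 1)
    (x : ℝ) (hx : 0 ≤ x) :
    (μ {ω | (n : ℝ) + 2 * Real.sqrt ((n : ℝ) * x) + 2 * x ≤ ∑ i, (Z i ω) ^ 2}).toReal ≤
      Real.exp (-x) := by
  have hAE : ∀ i, AEMeasurable (Z i) μ := by
    intro i
    by_contra hc
    have h0 := hZ i
    rw [Measure.map_of_not_aemeasurable hc] at h0
    exact (IsProbabilityMeasure.ne_zero (gaussianReal 0 1)) h0.symm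
  rcases hx.eq_or_lt with h0 | hxpos
  · -- x = 0
    have h1 : μ {ω | (n : ℝ) + 2 * Real.sqrt ((n : ℝ) * x) + 2 * x ≤ ∑ i, (Z i ω) ^ 2} ≤ 1 :=
      prob_le_one
    calc (μ {ω | (n : ℝ) + 2 * Real.sqrt ((n : ℝ) * x) + 2 * x ≤ ∑ i, (Z i ω) ^ 2}).toReal
        ≤ (1 : ℝ≥0∞).toReal := ENNReal.toReal_mono (by norm_num) h1
      _ = 1 := by simp
      _ ≤ Real.exp (-x) := by rw [← h0]; simp
  rcases Nat.eq_zero_or_pos n with hn0 | hn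
  · -- n = 0
    subst hn0
    have hempty : {ω : Ω | ((0:ℕ) : ℝ) + 2 * Real.sqrt (((0:ℕ):ℝ) * x) + 2 * x
        ≤ ∑ i : Fin 0, (Z i ω) ^ 2} = ∅ := by
      ext ω
      simp only [Set.mem_setOf_eq, Set.mem_empty_iff_false, iff_false, not_le,
        Nat.cast_zero, zero_mul, Real.sqrt_zero, mul_zero, zero_add, Finset.univ_eq_empty,
        Finset.sum_empty]
      linarith
    rw [hempty]
    simp only [measure_empty, ENNReal.toReal_zero]
    exact (Real.exp_pos _).le
  -- main case
  set t : ℝ := Real.sqrt x / (Real.sqrt n + 2*Real.sqrt x) with ht_def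
  have hsn : (0:ℝ) < Real.sqrt n := Real.sqrt_pos.2 (by exact_mod_cast hn)
  have hsx : (0:ℝ) < Real.sqrt x := Real.sqrt_pos.2 hxpos
  have hden : (0:ℝ) < Real.sqrt n + 2*Real.sqrt x := by linarith
  have ht0 : 0 < t := div_pos hsx hden
  have ht2 : t < 1/2 := by
    rw [ht_def, div_lt_iff₀ hden]
    linarith
  set Z' : Fin n → Ω → ℝ := fun i => AEMeasurable.mk (Z i) (hAE i) with hZ'def
  have hmeas' : ∀ i, Measurable (Z' i) := fun i => (hAE i).measurable_mk
  have hae : ∀ i, Z i =ᵐ[μ] Z' i := fun i => (hAE i).ae_eq_mk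
  have hInd' : iIndepFun Z' μ := aux_iIndepFun_ae_eq hInd hae
  have hmap' : ∀ i, Measure.map (Z' i) μ = gaussianReal 0 1 := fun i => by
    rw [← Measure.map_congr (hae i)]; exact hZ i
  set X : Fin n → Ω → ℝ := fun i ω => (Z' i ω)^2 with hX_def
  have hXmeas : ∀ i, Measurable (X i) := fun i => (hmeas' i).pow_const 2
  have hXind : iIndepFun X μ :=
    hInd'.comp (fun _ y => y^2) (fun _ => measurable_id.pow_const 2)
  set a : ℝ := (n:ℝ) + 2 * Real.sqrt ((n:ℝ)*x) + 2*x with ha_def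
  have hgm : Measurable (fun y : ℝ => Real.exp (t * y^2)) :=
    Real.measurable_exp.comp ((measurable_id.pow_const 2).const_mul t)
  have hset : μ {ω | a ≤ ∑ i, (Z i ω)^2} = μ {ω | a ≤ (∑ i, X i) ω} := by
    apply measure_congr
    have hae' : ∀ᵐ ω ∂μ, ∀ i, Z i ω = Z' i ω := ae_all_iff.2 fun i => hae i
    filter_upwards [hae'] with ω hω
    show (a ≤ ∑ i, (Z i ω)^2) = (a ≤ (∑ i, X i) ω)
    rw [Finset.sum_apply]
    have hsum : ∑ i, (Z i ω)^2 = ∑ i, X i ω :=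
      Finset.sum_congr rfl fun i _ => by rw [hX_def]; rw [hω i]
    rw [hsum]
  have hint_i : ∀ i, Integrable (fun ω => Real.exp (t * X i ω)) μ := fun i => by
    have h1 : Integrable (fun y : ℝ => Real.exp (t * y^2)) (Measure.map (Z' i) μ) := by
      rw [hmap' i]; exact aux_integrable_exp_sq ht2
    rw [integrable_map_measure hgm.aestronglyMeasurable (hmeas' i).aemeasurable] at h1
    exact h1
  have hint_sum : Integrable (fun ω => Real.exp (t * (∑ i, X i) ω)) μ :=
    hXind.integrable_exp_mul_sum hXmeas (fun i _ => hint_i i)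
  have hmgf_i : ∀ i, mgf (X i) μ t = (Real.sqrt (1 - 2*t))⁻¹ := fun i => by
    have h1 : ∫ y, Real.exp (t*y^2) ∂(Measure.map (Z' i) μ) = ∫ ω, Real.exp (t * X i ω) ∂μ :=
      integral_map (hmeas' i).aemeasurable hgm.aestronglyMeasurable
    rw [mgf, ← h1, hmap' i, aux_integral_exp_sq ht2]
  have hch := measure_ge_le_exp_mul_mgf (μ := μ) (X := ∑ i, X i) a ht0.le hint_sum
  calc (μ {ω | a ≤ ∑ i, (Z i ω)^2}).toReal
      = (μ {ω | a ≤ (∑ i, X i) ω}).toReal := by rw [hset]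
    _ ≤ Real.exp (-t*a) * mgf (∑ i, X i) μ t := hch
    _ = Real.exp (-t*a) * ∏ i, mgf (X i) μ t := by rw [hXind.mgf_sum hXmeas]
    _ = Real.exp (-t*a) * ((Real.sqrt (1-2*t))⁻¹)^n := by
        rw [Finset.prod_congr rfl (fun i _ => hmgf_i i), Finset.prod_const, Finset.card_univ,
          Fintype.card_fin]
    _ ≤ Real.exp (-t*a) * (Real.exp (t + t^2/(1-2*t)))^n := by
        have hbase : (0:ℝ) ≤ (Real.sqrt (1-2*t))⁻¹ := by positivity
        have hle := aux_sqrt_inv_le ht0.le ht2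
        exact mul_le_mul_of_nonneg_left (pow_le_pow_left₀ hbase hle n) (Real.exp_pos _).le
    _ = Real.exp (-t*a + (n:ℝ)*(t + t^2/(1-2*t))) := by
        rw [← Real.exp_nat_mul, ← Real.exp_add]
    _ = Real.exp (-x) := by
        congr 1
        rw [ht_def, ha_def]
        exact aux_expo hn hxpos
end
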